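/- Let {e_k} be an orthonormal basis of a Hilbert space H and define f_k = e_k + e_{k+1}. Then the linear operator T on span{f_k} with T f_k = f_{k+1} extends to an isometry on H, i.e., ‖T(∑_{k=1}^N c_k f_k)‖ = ‖∑_{k=1}^N c_k f_k‖ for all finite scalar sequences. -/

import Mathlib

open Filter Finset Topology

/-- For the sequence `f k = e k + e (k+1)` built from an orthonormal basis, the shift
operator `T f_k = f_{k+1}` is isometric on finite linear combinations. -/
theorem stmt_4 {H : Type*} [NormedAddCommGroup H] [InnerProductSpace ℂ H]
    [CompleteSpace H]
    (b : HilbertBasis ℕ ℂ H) (f : ℕ → H) (hf : ∀ k, f k = b k + b (k + 1)) :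
    ∀ (N : ℕ) (c : ℕ → ℂ),
      ‖∑ k ∈ Finset.range N, c k • f (k + 1)‖ = ‖∑ k ∈ Finset.range N, c k • f k‖ := by
  intro N c
  have hb := b.orthonormal
  have hbi : ∀ i j : ℕ, (inner ℂ (b i) (b j) : ℂ) = if i = j then 1 else 0 :=
    orthonormal_iff_ite.mp hb
  have key : ∀ i j : ℕ, (inner ℂ (f (i + 1)) (f (j + 1)) : ℂ) = inner ℂ (f i) (f j) := by
    intro i j
    simp only [hf, inner_add_left, inner_add_right, hbi]
    simp [Nat.add_right_cancel_iff]
  rw [@norm_eq_sqrt_re_inner ℂ, @norm_eq_sqrt_re_inner ℂ]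
  congr 2
  simp only [inner_sum, sum_inner, inner_smul_left, inner_smul_right, key]
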